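/- Let C : 𝒳 → Finset 𝒴 be a set-valued predictor and set β = P(Y ∉ C(X)) = 1 − P(Y ∈ C(X)). If β < 1, then H(Y|X) ≤ h_b(β) + β·log|𝒴| + (1 − β)·E[log|C(X)| | Y ∈ C(X)]. -/
import Mathlib


open Finset

/-- Binary entropy function (natural log). -/
noncomputable def binEnt (p : ℝ) : ℝ := -(p * Real.log p) - (1 - p) * Real.log (1 - p)

/-- For a probability mass function `μ` on `𝒳 × 𝒴` with coordinates `(X, Y)`
and a set-valued predictor `C`, let `β = P(Y ∉ C(X)) = 1 - P(Y ∈ C(X))`.  If `β < 1`, then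
`H(Y|X) ≤ h_b(β) + β log|𝒴| + (1 - β) E[log|C(X)| ∣ Y ∈ C(X)]`. -/
theorem conditional_entropy_le_miscoverage_bound
    {𝒳 𝒴 : Type*} [Fintype 𝒳] [Fintype 𝒴] [Nonempty 𝒳] [Nonempty 𝒴]
    (μ : 𝒳 → 𝒴 → ℝ)
    (hμ0 : ∀ x y, 0 ≤ μ x y)
    (hμ1 : ∑ x, ∑ y, μ x y = 1)
    (C : 𝒳 → Finset 𝒴)
    (β : ℝ)
    (hβ : β = 1 - ∑ x, ∑ y ∈ C x, μ x y)
    (hβ1 : β < 1) :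
    (-∑ x, ∑ y, μ x y * Real.log (μ x y / ∑ y', μ x y'))
      ≤ binEnt β + β * Real.log (Fintype.card 𝒴)
        + (1 - β) * ((∑ x, ∑ y ∈ C x, μ x y)⁻¹
            * ∑ x, ∑ y ∈ C x, μ x y * Real.log ((C x).card : ℝ)) := by
  classical
  set ν : 𝒳 → ℝ := fun x => ∑ y', μ x y' with hνdef
  have hν0 : ∀ x, 0 ≤ ν x := fun x => Finset.sum_nonneg fun y _ => hμ0 x y
  have hμν : ∀ x y, μ x y ≤ ν x := fun x y =>
    Finset.single_le_sum (fun y _ => hμ0 x y) (mem_univ y)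
  set T : ℝ := ∑ x, ∑ y ∈ C x, μ x y with hTdef
  have hsplit : ∀ x, ∑ y ∈ C x, μ x y + ∑ y ∈ (C x)ᶜ, μ x y = ν x := fun x =>
    Finset.sum_add_sum_compl (C x) (fun y => μ x y)
  have hTU : T + (∑ x, ∑ y ∈ (C x)ᶜ, μ x y) = 1 := by
    rw [hTdef, ← Finset.sum_add_distrib]
    rw [← hμ1]
    exact Finset.sum_congr rfl fun x _ => hsplit x
  have hβU : β = ∑ x, ∑ y ∈ (C x)ᶜ, μ x y := by rw [hβ]; linarith
  have hβ0 : 0 ≤ β := by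
    rw [hβU]
    exact Finset.sum_nonneg fun x _ => Finset.sum_nonneg fun y _ => hμ0 x y
  have h1β : 0 < 1 - β := by linarith
  have hT1β : T = 1 - β := by rw [hβ]; ring
  have hN : (0:ℝ) < Fintype.card 𝒴 := by exact_mod_cast Fintype.card_pos
  -- the coding conditional distribution
  set r : 𝒳 → 𝒴 → ℝ := fun x y =>
    if y ∈ C x then (1 - β) / ((C x).card : ℝ) else β / (Fintype.card 𝒴 : ℝ) with hrdef
  have hr0 : ∀ x y, 0 ≤ r x y := by
    intro x y
    simp only [hrdef]
    split
    · positivity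
    · positivity
  -- positivity of β on uncovered pairs with positive mass
  have hβpos : ∀ x y, y ∉ C x → 0 < μ x y → 0 < β := by
    intro x y hy hμpos
    rw [hβU]
    refine lt_of_lt_of_le hμpos ?_
    calc μ x y ≤ ∑ y ∈ (C x)ᶜ, μ x y :=
          Finset.single_le_sum (fun y _ => hμ0 x y) (by simpa using hy)
      _ ≤ ∑ x, ∑ y ∈ (C x)ᶜ, μ x y :=
          Finset.single_le_sum (f := fun x => ∑ y ∈ (C x)ᶜ, μ x y)
            (fun x _ => Finset.sum_nonneg fun y _ => hμ0 x y) (mem_univ x)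
  have hrpos : ∀ x y, 0 < μ x y → 0 < r x y := by
    intro x y hμpos
    simp only [hrdef]
    split
    · rename_i hy
      have hc : (0:ℝ) < (C x).card := by
        exact_mod_cast Finset.card_pos.mpr ⟨y, hy⟩
      positivity
    · rename_i hy
      have := hβpos x y hy hμpos
      positivity
  -- the total mass of the coding joint distribution is ≤ 1
  have hqsum : ∑ x, ∑ y, ν x * r x y ≤ 1 := by
    have hx : ∀ x, ∑ y, ν x * r x y ≤ ν x := by
      intro x
      rw [← Finset.mul_sum]
      have hsum_r : ∑ y, r x y ≤ 1 := by
        rw [← Finset.sum_add_sum_compl (C x) (fun y => r x y)]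
        have h1 : ∑ y ∈ C x, r x y ≤ 1 - β := by
          have : ∀ y ∈ C x, r x y = (1 - β) / ((C x).card : ℝ) := by
            intro y hy; simp [hrdef, hy]
          rw [Finset.sum_congr rfl this, Finset.sum_const, nsmul_eq_mul]
          rcases Nat.eq_zero_or_pos (C x).card with hc | hc
          · rw [hc]; simpa using h1β.le
          · have hc' : ((C x).card : ℝ) ≠ 0 := by positivity
            exact le_of_eq (by field_simp)
        have h2 : ∑ y ∈ (C x)ᶜ, r x y ≤ β := by
          have : ∀ y ∈ (C x)ᶜ, r x y = β / (Fintype.card 𝒴 : ℝ) := by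
            intro y hy
            simp only [Finset.mem_compl] at hy
            simp [hrdef, hy]
          rw [Finset.sum_congr rfl this, Finset.sum_const, nsmul_eq_mul]
          have hcard : ((C x)ᶜ.card : ℝ) ≤ (Fintype.card 𝒴 : ℝ) := by
            exact_mod_cast Finset.card_le_card (Finset.subset_univ _)
          calc ((C x)ᶜ.card : ℝ) * (β / (Fintype.card 𝒴 : ℝ))
              ≤ (Fintype.card 𝒴 : ℝ) * (β / (Fintype.card 𝒴 : ℝ)) := by
                apply mul_le_mul_of_nonneg_right hcard; positivity
            _ = β := by field_simp
        linarith
      calc ν x * ∑ y, r x y ≤ ν x * 1 := mul_le_mul_of_nonneg_left hsum_r (hν0 x)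
        _ = ν x := mul_one _
    calc ∑ x, ∑ y, ν x * r x y ≤ ∑ x, ν x := Finset.sum_le_sum fun x _ => hx x
      _ = 1 := hμ1
  -- Gibbs inequality
  have gibbs : ∑ x, ∑ y, μ x y * Real.log (ν x * r x y)
      ≤ ∑ x, ∑ y, μ x y * Real.log (μ x y) := by
    have key : ∀ x y, μ x y * Real.log (ν x * r x y) - μ x y * Real.log (μ x y)
        ≤ ν x * r x y - μ x y := by
      intro x y
      rcases eq_or_lt_of_le (hμ0 x y) with h | h
      · rw [← h]
        simp only [zero_mul, sub_zero, sub_self]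
        have := mul_nonneg (hν0 x) (hr0 x y)
        linarith
      · have hq : 0 < ν x * r x y :=
          mul_pos (lt_of_lt_of_le h (hμν x y)) (hrpos x y h)
        have hlog := Real.log_le_sub_one_of_pos (div_pos hq h)
        rw [Real.log_div hq.ne' h.ne'] at hlog
        have h2 : μ x y * (Real.log (ν x * r x y) - Real.log (μ x y))
            ≤ μ x y * (ν x * r x y / μ x y - 1) :=
          mul_le_mul_of_nonneg_left hlog h.le
        have h3 : μ x y * (ν x * r x y / μ x y - 1) = ν x * r x y - μ x y := by
          field_simp
        nlinarith [h2, h3]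
    have hsum : ∑ x, ∑ y, (μ x y * Real.log (ν x * r x y) - μ x y * Real.log (μ x y))
        ≤ ∑ x, ∑ y, (ν x * r x y - μ x y) := by
      apply Finset.sum_le_sum; intro x _
      apply Finset.sum_le_sum; intro y _
      exact key x y
    simp only [Finset.sum_sub_distrib] at hsum
    have : ∑ x, ∑ y, (ν x * r x y) - ∑ x, ∑ y, μ x y ≤ 0 := by
      rw [hμ1]; linarith [hqsum]
    linarith
  -- rewrite the left-hand side
  have lhs_eq : (-∑ x, ∑ y, μ x y * Real.log (μ x y / ν x))
      = -∑ x, ∑ y, μ x y * Real.log (μ x y) + ∑ x, ∑ y, μ x y * Real.log (ν x) := by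
    have : ∀ x y, μ x y * Real.log (μ x y / ν x)
        = μ x y * Real.log (μ x y) - μ x y * Real.log (ν x) := by
      intro x y
      rcases eq_or_lt_of_le (hμ0 x y) with h | h
      · rw [← h]; ring
      · have hνpos : 0 < ν x := lt_of_lt_of_le h (hμν x y)
        rw [Real.log_div h.ne' hνpos.ne']; ring
    simp only [this, Finset.sum_sub_distrib]
    ring
  -- decompose log of coding distribution
  have decomp : ∑ x, ∑ y, μ x y * Real.log (ν x * r x y)
      = ∑ x, ∑ y, μ x y * Real.log (ν x) + ∑ x, ∑ y, μ x y * Real.log (r x y) := by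
    have : ∀ x y, μ x y * Real.log (ν x * r x y)
        = μ x y * Real.log (ν x) + μ x y * Real.log (r x y) := by
      intro x y
      rcases eq_or_lt_of_le (hμ0 x y) with h | h
      · rw [← h]; ring
      · have hνpos : 0 < ν x := lt_of_lt_of_le h (hμν x y)
        rw [Real.log_mul hνpos.ne' (hrpos x y h).ne']; ring
    simp only [this, Finset.sum_add_distrib]
  -- evaluate the cross entropy term
  have cross : -∑ x, ∑ y, μ x y * Real.log (r x y)
      = binEnt β + β * Real.log (Fintype.card 𝒴)
        + ∑ x, ∑ y ∈ C x, μ x y * Real.log ((C x).card : ℝ) := by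
    have hxsplit : ∀ x, ∑ y, μ x y * Real.log (r x y)
        = ∑ y ∈ C x, (μ x y * Real.log (1 - β) - μ x y * Real.log ((C x).card : ℝ))
          + ∑ y ∈ (C x)ᶜ, (μ x y * Real.log β - μ x y * Real.log (Fintype.card 𝒴)) := by
      intro x
      rw [← Finset.sum_add_sum_compl (C x) (fun y => μ x y * Real.log (r x y))]
      congr 1
      · apply Finset.sum_congr rfl
        intro y hy
        have hc : ((C x).card : ℝ) ≠ 0 := by
          have : (0:ℝ) < (C x).card := by
            exact_mod_cast Finset.card_pos.mpr ⟨y, hy⟩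
          positivity
        simp only [hrdef, if_pos hy]
        rw [Real.log_div h1β.ne' hc]; ring
      · apply Finset.sum_congr rfl
        intro y hy
        simp only [Finset.mem_compl] at hy
        simp only [hrdef, if_neg hy]
        rcases eq_or_lt_of_le (hμ0 x y) with h | h
        · rw [← h]; ring
        · have hβp : 0 < β := hβpos x y hy h
          rw [Real.log_div hβp.ne' hN.ne']; ring
    have e1 : ∑ x, ∑ y ∈ C x, μ x y * Real.log (1 - β) = (1 - β) * Real.log (1 - β) := by
      simp_rw [← Finset.sum_mul]
      rw [← hTdef, hT1β]
    have e2 : ∑ x, ∑ y ∈ (C x)ᶜ, μ x y * Real.log β = β * Real.log β := by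
      simp_rw [← Finset.sum_mul]
      rw [← hβU]
    have e3 : ∑ x, ∑ y ∈ (C x)ᶜ, μ x y * Real.log (Fintype.card 𝒴)
        = β * Real.log (Fintype.card 𝒴) := by
      simp_rw [← Finset.sum_mul]
      rw [← hβU]
    simp only [hxsplit, Finset.sum_sub_distrib, Finset.sum_add_distrib]
    rw [e1, e2, e3, binEnt]
    ring
  -- put everything together
  have main : (-∑ x, ∑ y, μ x y * Real.log (μ x y / ν x))
      ≤ binEnt β + β * Real.log (Fintype.card 𝒴)
        + ∑ x, ∑ y ∈ C x, μ x y * Real.log ((C x).card : ℝ) := by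
    rw [lhs_eq, ← cross]
    rw [decomp] at gibbs
    linarith
  have hfinal : (1 - β) * ((∑ x, ∑ y ∈ C x, μ x y)⁻¹
      * ∑ x, ∑ y ∈ C x, μ x y * Real.log ((C x).card : ℝ))
      = ∑ x, ∑ y ∈ C x, μ x y * Real.log ((C x).card : ℝ) := by
    rw [← hTdef, hT1β, ← mul_assoc, mul_inv_cancel₀ h1β.ne', one_mul]
  rw [hfinal]
  exact main
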